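/- arXiv:2510.24308 — 3 statements merged into one kernel-verified Lean document; each statement's English description precedes it below -/
import Mathlib

section
/- Let 𝔄 be a C*-algebra and let x, y ∈ 𝔄. Then x is strongly Birkhoff–James orthogonal to y if and only if ‖‖y‖²·x − y·y*·x‖ = ‖x‖·‖y‖². -/
lemma sbj_aux (K : ℕ) (c t : ℝ) (ht0 : 0 ≤ t) (htc : t ≤ c) :
    ((K : ℝ) + 1) * ((c - t) ^ K * t) ≤ c ^ (K + 1) := by
  have hct : 0 ≤ c - t := sub_nonneg.mpr htc
  have hsum : (∑ i ∈ Finset.range (K + 1), c ^ i * (c - t) ^ (K - i)) * (c - (c - t))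
      = c ^ (K + 1) - (c - t) ^ (K + 1) := geom_sum₂_mul c (c - t) (K + 1)
  have hterm : ∀ i ∈ Finset.range (K + 1), (c - t) ^ K ≤ c ^ i * (c - t) ^ (K - i) := by
    intro i hi
    have hi' : i ≤ K := Nat.lt_succ_iff.mp (Finset.mem_range.mp hi)
    calc (c - t) ^ K = (c - t) ^ i * (c - t) ^ (K - i) := by
          rw [← pow_add]; congr 1; omega
      _ ≤ c ^ i * (c - t) ^ (K - i) := by gcongr <;> linarith
  have h1 : ((K : ℝ) + 1) * (c - t) ^ K
      ≤ ∑ i ∈ Finset.range (K + 1), c ^ i * (c - t) ^ (K - i) := by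
    calc ((K : ℝ) + 1) * (c - t) ^ K
        = ∑ _i ∈ Finset.range (K + 1), (c - t) ^ K := by
          rw [Finset.sum_const, Finset.card_range]; push_cast; ring
      _ ≤ _ := Finset.sum_le_sum hterm
  have h2 : (((K : ℝ) + 1) * (c - t) ^ K) * t
      ≤ (∑ i ∈ Finset.range (K + 1), c ^ i * (c - t) ^ (K - i)) * t :=
    mul_le_mul_of_nonneg_right h1 ht0
  have h3 : c - (c - t) = t := by ring
  rw [h3] at hsum
  have h4 : (0:ℝ) ≤ (c - t) ^ (K + 1) := pow_nonneg hct _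
  nlinarith

/-- `x` is strongly Birkhoff–James orthogonal to `y`:
`‖x + y·z‖ ≥ ‖x‖` for every `z` in the algebra. -/
def SBJOrth {A : Type*} [NonUnitalNormedRing A] (x y : A) : Prop :=
  ∀ z : A, ‖x‖ ≤ ‖x + y * z‖

set_option maxHeartbeats 1000000 in
/-- Lemma: `x ⊥ˢ y` iff `‖‖y‖²·x − y·y*·x‖ = ‖x‖·‖y‖²`. -/
theorem sbj_iff_norm_eq {A : Type*} [NonUnitalCStarAlgebra A] (x y : A) :
    SBJOrth x y ↔ ‖(‖y‖ ^ 2 : ℂ) • x - y * star y * x‖ = ‖x‖ * ‖y‖ ^ 2 := by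
  rcases eq_or_ne y 0 with rfl | hy
  · constructor
    · intro _; simp
    · intro _ z; simp
  rcases eq_or_ne x 0 with rfl | hx
  · constructor
    · intro _; simp
    · intro _ z; simp
  -- main case
  set c : ℝ := ‖y‖ ^ 2 with hc
  have hc_pos : 0 < c := by
    have : 0 < ‖y‖ := norm_pos_iff.mpr hy
    rw [hc]; positivity
  have hx_pos : 0 < ‖x‖ := norm_pos_iff.mpr hx
  set A' := Unitization ℂ A
  set x' : A' := (x : A') with hx'
  set y' : A' := (y : A') with hy'
  set a : A' := y' * star y' with ha
  have ha_nonneg : 0 ≤ a := mul_star_self_nonneg y'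
  have ha_sa : IsSelfAdjoint a := ha_nonneg.isSelfAdjoint
  have hnorm_a : ‖a‖ = c := by
    rw [ha, CStarRing.norm_self_mul_star, hy', Unitization.norm_inr, hc]; ring
  have hspec : ∀ t ∈ spectrum ℝ a, 0 ≤ t ∧ t ≤ c := by
    intro t ht
    refine ⟨spectrum_nonneg_of_nonneg ha_nonneg ht, ?_⟩
    have h1 := spectrum.norm_le_norm_of_mem ht
    rw [hnorm_a] at h1
    exact (Real.norm_eq_abs t ▸ le_abs_self t).trans h1
  set q : A' := algebraMap ℝ A' c - a with hq
  have hq_cfc : q = cfc (fun t : ℝ => c - t) a := by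
    have h1 : cfc (fun t : ℝ => c - t) a = cfc (fun _ : ℝ => c) a - cfc (id : ℝ → ℝ) a :=
      cfc_sub _ _ a
    rw [hq, h1, cfc_const c a, cfc_id ℝ a]
  have hq_sa : IsSelfAdjoint q := by
    rw [hq_cfc]; exact cfc_predicate _ a
  have hq_norm : ‖q‖ ≤ c := by
    rw [hq_cfc]
    refine norm_cfc_le hc_pos.le fun t ht => ?_
    obtain ⟨h0, h1⟩ := hspec t ht
    rw [Real.norm_eq_abs, abs_le]
    constructor <;> linarith
  have hcomm : Commute q a := by
    rw [hq]
    exact (Algebra.commute_algebraMap_left c a).sub_left (Commute.refl a)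
  have e0 : ((‖y‖ : ℂ) ^ 2) • x = c • x := by
    rw [show ((‖y‖:ℂ)^2) = ((c:ℝ):ℂ) by norm_cast]
    exact Complex.coe_smul c x
  have hx_eq : (((‖y‖ ^ 2 : ℂ) • x - y * star y * x : A) : A') = q * x' := by
    rw [e0, Unitization.inr_sub, Unitization.inr_smul, Unitization.inr_mul,
      Unitization.inr_mul, Unitization.inr_star, hq, sub_mul, ← Algebra.smul_def,
      ha, hx', hy', mul_assoc]
  have hnorm_rel : ‖(‖y‖ ^ 2 : ℂ) • x - y * star y * x‖ = ‖q * x'‖ := by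
    rw [← hx_eq, Unitization.norm_inr]
  constructor
  · intro h
    refine le_antisymm ?_ ?_
    · calc ‖(‖y‖ ^ 2 : ℂ) • x - y * star y * x‖ = ‖q * x'‖ := hnorm_rel
        _ ≤ ‖q‖ * ‖x'‖ := norm_mul_le _ _
        _ ≤ c * ‖x‖ := by
            rw [hx', Unitization.norm_inr]
            exact mul_le_mul_of_nonneg_right hq_norm (norm_nonneg x)
        _ = ‖x‖ * c := mul_comm _ _
    · set z : A := -(((c : ℝ) : ℂ)⁻¹ • (star y * x)) with hz
      have hc0 : ((c : ℝ) : ℂ) ≠ 0 := by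
        simpa using hc_pos.ne'
      have hyz : ((c : ℝ) : ℂ) • (x + y * z) = (‖y‖ ^ 2 : ℂ) • x - y * star y * x := by
        rw [hz]
        rw [show ((‖y‖ : ℂ) ^ 2) = ((c : ℝ) : ℂ) by norm_cast]
        rw [mul_neg, mul_smul_comm, smul_add, smul_neg, smul_smul,
          mul_inv_cancel₀ hc0, one_smul, mul_assoc]
        rw [sub_eq_add_neg]
      have h1 := h z
      calc ‖x‖ * c = c * ‖x‖ := mul_comm _ _
        _ ≤ c * ‖x + y * z‖ := by
            exact mul_le_mul_of_nonneg_left h1 hc_pos.le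
        _ = ‖((c : ℝ) : ℂ) • (x + y * z)‖ := by
            rw [norm_smul]
            simp [abs_of_pos hc_pos]
        _ = _ := by rw [hyz]
  · intro h z
    have hqx : ‖q * x'‖ = ‖x‖ * c := by rw [← hnorm_rel, h]
    -- lower bound for powers
    have hpow : ∀ k : ℕ, c ^ (2 ^ k) * ‖x‖ ≤ ‖q ^ (2 ^ k) * x'‖ := by
      intro k
      induction k with
      | zero => simp [hqx, mul_comm]
      | succ k ih =>
        set M := 2 ^ k with hM
        have hMM : (2 : ℕ) ^ (k + 1) = M + M := by rw [pow_succ]; omega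
        have h1 : ‖q ^ M * x'‖ ^ 2 = ‖star x' * (q ^ (M + M) * x')‖ := by
          rw [sq, ← CStarRing.norm_star_mul_self]
          congr 1
          rw [star_mul, (hq_sa.pow M).star_eq, pow_add]
          simp [mul_assoc]
        have h2 : ‖star x' * (q ^ (M + M) * x')‖ ≤ ‖x‖ * ‖q ^ (M + M) * x'‖ := by
          calc ‖star x' * (q ^ (M + M) * x')‖ ≤ ‖star x'‖ * ‖q ^ (M + M) * x'‖ :=
                norm_mul_le _ _
            _ = ‖x‖ * ‖q ^ (M + M) * x'‖ := by rw [norm_star, hx', Unitization.norm_inr]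
        have h3 : (c ^ M * ‖x‖) ^ 2 ≤ ‖q ^ M * x'‖ ^ 2 := by
          have hnn : (0:ℝ) ≤ c ^ M * ‖x‖ := by positivity
          exact pow_le_pow_left₀ hnn ih 2
        have e : (c ^ M * ‖x‖) ^ 2 = c ^ (M + M) * ‖x‖ * ‖x‖ := by rw [pow_add]; ring
        have h5 : ‖x‖ * (c ^ (M + M) * ‖x‖) ≤ ‖x‖ * ‖q ^ (M + M) * x'‖ := by nlinarith
        rw [hMM]
        exact le_of_mul_le_mul_left h5 hx_pos
    -- upper bound for ‖q^M y'‖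
    have hy_bound : ∀ M : ℕ, ‖q ^ M * y'‖ ^ 2 ≤ c ^ (M + M) * c / ((M + M : ℝ) + 1) := by
      intro M
      have h1 : ‖q ^ M * y'‖ ^ 2 = ‖q ^ (M + M) * a‖ := by
        rw [sq, ← CStarRing.norm_self_mul_star]
        congr 1
        rw [star_mul, (hq_sa.pow M).star_eq, pow_add, ha]
        have hc2 : a * q ^ M = q ^ M * a := ((hcomm.pow_left M).symm).eq
        rw [ha] at hc2
        calc q ^ M * y' * (star y' * q ^ M) = q ^ M * (y' * star y' * q ^ M) := by
              simp [mul_assoc]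
          _ = q ^ M * (q ^ M * (y' * star y')) := by rw [hc2]
          _ = q ^ M * q ^ M * (y' * star y') := by rw [mul_assoc]
      have h2 : q ^ (M + M) * a = cfc (fun t : ℝ => (c - t) ^ (M + M) * t) a := by
        have e1 : cfc (fun t : ℝ => (c - t) ^ (M + M) * t) a
            = cfc (fun t : ℝ => (c - t) ^ (M + M)) a * cfc (id : ℝ → ℝ) a := cfc_mul _ _ a
        have e2 : cfc (fun t : ℝ => (c - t) ^ (M + M)) a
            = (cfc (fun t : ℝ => c - t) a) ^ (M + M) := cfc_pow _ _ a
        rw [e1, e2, ← hq_cfc, cfc_id ℝ a]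
      rw [h1, h2]
      have hb0 : (0:ℝ) ≤ c ^ (M + M) * c / ((M + M : ℝ) + 1) := by positivity
      refine norm_cfc_le hb0 fun t ht => ?_
      obtain ⟨ht0, htc⟩ := hspec t ht
      have haux := sbj_aux (M + M) c t ht0 htc
      have hval : (0:ℝ) ≤ (c - t) ^ (M + M) * t := by
        have : (0:ℝ) ≤ c - t := by linarith
        positivity
      rw [Real.norm_eq_abs, abs_of_nonneg hval]
      rw [le_div_iff₀ (by positivity)]
      calc (c - t) ^ (M + M) * t * ((M + M : ℝ) + 1)
          = ((M + M : ℝ) + 1) * ((c - t) ^ (M + M) * t) := by ring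
        _ ≤ c ^ (M + M + 1) := by
            have : ((M + M : ℕ) : ℝ) + 1 = (M + M : ℝ) + 1 := by push_cast; ring
            rw [← this]; exact haux
        _ = c ^ (M + M) * c := by rw [pow_succ]
    -- conclude
    refine le_of_forall_pos_le_add fun ε hε => ?_
    obtain ⟨k, hk⟩ := pow_unbounded_of_one_lt (c * ‖z‖ ^ 2 / ε ^ 2) (one_lt_two (α := ℝ))
    set M := 2 ^ k with hM
    have hMpos : 0 < M := Nat.pow_pos (by norm_num)
    set z' : A' := (z : A') with hz'
    have hzz : c * ‖z‖ ^ 2 ≤ ((M + M : ℝ) + 1) * ε ^ 2 := by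
      have hcast : ((2 : ℝ) ^ k) = (M : ℝ) := by rw [hM]; push_cast; ring
      have h1 : c * ‖z‖ ^ 2 < (M : ℝ) * ε ^ 2 := by
        rw [← hcast]
        calc c * ‖z‖ ^ 2 = c * ‖z‖ ^ 2 / ε ^ 2 * ε ^ 2 := by field_simp
          _ < (2:ℝ) ^ k * ε ^ 2 := by
              exact mul_lt_mul_of_pos_right hk (by positivity)
      have hMle : (M : ℝ) ≤ (M + M : ℝ) + 1 := by
        have : (0:ℝ) ≤ (M:ℝ) := Nat.cast_nonneg M
        linarith
      exact (h1.trans_le (mul_le_mul_of_nonneg_right hMle (by positivity))).le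
    have hA : ‖q ^ M * x'‖ ≤ ‖q ^ M * (x' + y' * z')‖ + ‖q ^ M * (y' * z')‖ := by
      calc ‖q ^ M * x'‖ = ‖q ^ M * (x' + y' * z') - q ^ M * (y' * z')‖ := by
            rw [mul_add, add_sub_cancel_right]
        _ ≤ _ := norm_sub_le _ _
    have hqM : ‖q ^ M‖ ≤ c ^ M :=
      (norm_pow_le' q hMpos).trans (pow_le_pow_left₀ (norm_nonneg q) hq_norm M)
    have hB : ‖q ^ M * (x' + y' * z')‖ ≤ c ^ M * ‖x + y * z‖ := by
      have e1 : ((x + y * z : A) : A') = x' + y' * z' := by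
        rw [Unitization.inr_add, Unitization.inr_mul, hx', hy', hz']
      calc ‖q ^ M * (x' + y' * z')‖ ≤ ‖q ^ M‖ * ‖x' + y' * z'‖ := norm_mul_le _ _
        _ ≤ c ^ M * ‖x + y * z‖ := by
            rw [← e1, Unitization.norm_inr]
            exact mul_le_mul_of_nonneg_right hqM (norm_nonneg _)
    have hC : ‖q ^ M * (y' * z')‖ ≤ ‖q ^ M * y'‖ * ‖z‖ := by
      calc ‖q ^ M * (y' * z')‖ = ‖q ^ M * y' * z'‖ := by rw [mul_assoc]
        _ ≤ ‖q ^ M * y'‖ * ‖z'‖ := norm_mul_le _ _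
        _ = ‖q ^ M * y'‖ * ‖z‖ := by rw [hz', Unitization.norm_inr]
    have hD : ‖q ^ M * y'‖ * ‖z‖ ≤ c ^ M * ε := by
      have hsq : (‖q ^ M * y'‖ * ‖z‖) ^ 2 ≤ (c ^ M * ε) ^ 2 := by
        have h1 := hy_bound M
        have h2 : ‖q ^ M * y'‖ ^ 2 * ‖z‖ ^ 2 ≤ c ^ (M + M) * c / ((M + M : ℝ) + 1) * ‖z‖ ^ 2 :=
          mul_le_mul_of_nonneg_right h1 (by positivity)
        have h3 : c ^ (M + M) * c / ((M + M : ℝ) + 1) * ‖z‖ ^ 2 ≤ c ^ (M + M) * ε ^ 2 := by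
          rw [div_mul_eq_mul_div, div_le_iff₀ (by positivity : (0:ℝ) < (M + M : ℝ) + 1)]
          calc c ^ (M + M) * c * ‖z‖ ^ 2 = c ^ (M + M) * (c * ‖z‖ ^ 2) := by ring
            _ ≤ c ^ (M + M) * (((M + M : ℝ) + 1) * ε ^ 2) :=
                mul_le_mul_of_nonneg_left hzz (by positivity)
            _ = c ^ (M + M) * ε ^ 2 * ((M + M : ℝ) + 1) := by ring
        calc (‖q ^ M * y'‖ * ‖z‖) ^ 2 = ‖q ^ M * y'‖ ^ 2 * ‖z‖ ^ 2 := by ring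
          _ ≤ c ^ (M + M) * ε ^ 2 := h2.trans h3
          _ = (c ^ M * ε) ^ 2 := by rw [pow_add]; ring
      exact le_of_pow_le_pow_left₀ two_ne_zero (by positivity) hsq
    have hmain : c ^ M * ‖x‖ ≤ c ^ M * (‖x + y * z‖ + ε) := by
      calc c ^ M * ‖x‖ ≤ ‖q ^ M * x'‖ := hpow k
        _ ≤ ‖q ^ M * (x' + y' * z')‖ + ‖q ^ M * (y' * z')‖ := hA
        _ ≤ c ^ M * ‖x + y * z‖ + c ^ M * ε := add_le_add hB (hC.trans hD)
        _ = c ^ M * (‖x + y * z‖ + ε) := by ring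
    exact le_of_mul_le_mul_left hmain (by positivity)
end

section
/- Let 𝔄 be a C*-algebra and let x, y ∈ 𝔄. Then the following are equivalent: (i) x ⊥ˢ y; (ii) |x*| ⊥ˢ y; (iii) x ⊥ˢ |y*|; (iv) |x*| ⊥ˢ |y*|. -/
/-- The absolute value `|x| = (x*·x)^{1/2}` in a C*-algebra, so that
`cstarAbs (star x) = |x*| = (x·x*)^{1/2}`. -/
noncomputable def cstarAbs {A : Type*} [NonUnitalCStarAlgebra A] (x : A) : A :=
  cfcₙ Real.sqrt (star x * x)

namespace SBJAux


variable {A : Type*} [NonUnitalCStarAlgebra A]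

lemma qs_nonneg (v : A) : ∀ s ∈ quasispectrum ℝ (v * star v), 0 ≤ s := by
  rw [Unitization.quasispectrum_eq_spectrum_inr' ℝ ℂ]
  intro s hs
  apply spectrum_star_mul_self_nonneg (b := star ((v : Unitization ℂ A))) s
  simpa using hs

section eps

variable (v : A) {ε : ℝ} (hε : 0 < ε)

local notation "b" => v * star v

private lemma hbs : IsSelfAdjoint (v * star v : A) := IsSelfAdjoint.mul_star_self v

private lemma my_sqrt_sq :
    cfcₙ Real.sqrt (b : A) * cfcₙ Real.sqrt (b : A) = (b : A) := by
  rw [← cfcₙ_mul Real.sqrt Real.sqrt _ Real.continuous_sqrt.continuousOn Real.sqrt_zero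
      Real.continuous_sqrt.continuousOn Real.sqrt_zero,
    cfcₙ_congr (g := fun s : ℝ => s)
      (fun s hs => Real.mul_self_sqrt (qs_nonneg v s hs))]
  exact cfcₙ_id' ℝ _ (hbs v)

include hε in
private lemma hgc : ContinuousOn (fun s : ℝ => Real.sqrt s / (s + ε)) (quasispectrum ℝ (b : A)) := by
  refine ContinuousOn.div Real.continuous_sqrt.continuousOn (by fun_prop) fun s hs => ?_
  have := qs_nonneg v s hs
  positivity

private lemma hg0 : Real.sqrt 0 / (0 + ε) = 0 := by rw [Real.sqrt_zero, zero_div]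

include hε in
private lemma hcc : ContinuousOn (fun s : ℝ => s / (s + ε)) (quasispectrum ℝ (b : A)) := by
  refine ContinuousOn.div continuousOn_id (by fun_prop) fun s hs => ?_
  have := qs_nonneg v s hs
  positivity

private lemma hc0 : (0 : ℝ) / (0 + ε) = 0 := zero_div _

/-- generic product rule specialized to `b` -/
private lemma cfc_mul' (f g : ℝ → ℝ) (hf : ContinuousOn f (quasispectrum ℝ (b : A)))
    (hf0 : f 0 = 0) (hg : ContinuousOn g (quasispectrum ℝ (b : A))) (hg0 : g 0 = 0) :
    cfcₙ f (b : A) * cfcₙ g b = cfcₙ (fun s => f s * g s) b :=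
  (cfcₙ_mul f g _ hf hf0 hg hg0).symm

private lemma cfc_mul_b (f : ℝ → ℝ) (hf : ContinuousOn f (quasispectrum ℝ (b : A)))
    (hf0 : f 0 = 0) :
    cfcₙ f (b : A) * b = cfcₙ (fun s => f s * s) b := by
  have hid : (b : A) = cfcₙ (fun s : ℝ => s) b := (cfcₙ_id' ℝ _ (hbs v)).symm
  nth_rewrite 2 [hid]
  exact cfc_mul' v f (fun s => s) hf hf0 continuousOn_id rfl

private lemma cfc_b_mul (f : ℝ → ℝ) (hf : ContinuousOn f (quasispectrum ℝ (b : A)))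
    (hf0 : f 0 = 0) :
    (b : A) * cfcₙ f b = cfcₙ (fun s => s * f s) b := by
  have hid : (b : A) = cfcₙ (fun s : ℝ => s) b := (cfcₙ_id' ℝ _ (hbs v)).symm
  nth_rewrite 1 [hid]
  exact cfc_mul' v (fun s => s) f continuousOn_id rfl hf hf0

include hε in
/-- `a * g(a) = c` -/
private lemma sqrt_mul_g :
    cfcₙ Real.sqrt (b : A) * cfcₙ (fun s : ℝ => Real.sqrt s / (s + ε)) b
      = cfcₙ (fun s : ℝ => s / (s + ε)) b := by
  rw [cfc_mul' v Real.sqrt _ Real.continuous_sqrt.continuousOn Real.sqrt_zero (hgc v hε)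
    (hg0 (ε := ε))]
  refine cfcₙ_congr fun s hs => ?_
  have h0 := qs_nonneg v s hs
  show Real.sqrt s * (Real.sqrt s / (s + ε)) = s / (s + ε)
  rw [mul_div_assoc', Real.mul_self_sqrt h0]

include hε in
/-- `‖g(a) b g(a)‖ ≤ 1` -/
private lemma norm_gbg_le :
    ‖cfcₙ (fun s : ℝ => Real.sqrt s / (s + ε)) (b : A) * b
        * cfcₙ (fun s : ℝ => Real.sqrt s / (s + ε)) b‖ ≤ 1 := by
  rw [cfc_mul_b v _ (hgc v hε) (hg0 (ε := ε)),
    cfc_mul' v (fun s : ℝ => Real.sqrt s / (s + ε) * s) (fun s : ℝ => Real.sqrt s / (s + ε)) ((hgc v hε).mul (continuousOn_id' _)) (by simp) (hgc v hε) (hg0 (ε := ε))]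
  refine norm_cfcₙ_le fun s hs => ?_
  have h0 := qs_nonneg v s hs
  have key : Real.sqrt s / (s + ε) * s * (Real.sqrt s / (s + ε)) = s * s / ((s+ε)*(s+ε)) := by
    field_simp
    nlinarith [Real.mul_self_sqrt h0]
  rw [Real.norm_eq_abs, key, abs_of_nonneg (by positivity), div_le_one (by positivity)]
  nlinarith

end eps

section eps2

variable (v : A) {ε : ℝ} (hε : 0 < ε)

local notation "b" => v * star v

private lemma gsa : IsSelfAdjoint (cfcₙ (fun s : ℝ => Real.sqrt s / (s + ε)) (b : A)) :=
  cfcₙ_predicate _ _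

private lemma csa : IsSelfAdjoint (cfcₙ (fun s : ℝ => s / (s + ε)) (b : A)) :=
  cfcₙ_predicate _ _

include hε in
private lemma norm_contract_left : ‖cfcₙ (fun s : ℝ => Real.sqrt s / (s + ε)) (b : A) * v‖ ≤ 1 := by
  set g := cfcₙ (fun s : ℝ => Real.sqrt s / (s + ε)) (b : A) with hg
  have h1 : (g * v) * star (g * v) = g * (b : A) * g := by
    rw [star_mul, (gsa v (ε := ε)).star_eq]
    noncomm_ring
  have h2 : ‖g * v‖ * ‖g * v‖ = ‖g * (b:A) * g‖ := by
    rw [← h1, CStarRing.norm_self_mul_star]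
  have h3 := norm_gbg_le v hε
  nlinarith [norm_nonneg (g * v)]

include hε in
private lemma norm_contract_right : ‖star v * cfcₙ (fun s : ℝ => Real.sqrt s / (s + ε)) (b : A)‖ ≤ 1 := by
  set g := cfcₙ (fun s : ℝ => Real.sqrt s / (s + ε)) (b : A) with hg
  have h1 : star (star v * g) * (star v * g) = g * (b : A) * g := by
    rw [star_mul, (gsa v (ε := ε)).star_eq, star_star]
    noncomm_ring
  have h2 : ‖star v * g‖ * ‖star v * g‖ = ‖g * (b:A) * g‖ := by
    rw [← h1, CStarRing.norm_star_mul_self]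
  have h3 := norm_gbg_le v hε
  nlinarith [norm_nonneg (star v * g)]

private lemma sqrt_quarter (w : ℝ) (hw : 0 ≤ w) (h : w * w ≤ ε / 4) : w ≤ Real.sqrt ε / 2 := by
  have hε' : 0 ≤ ε := by nlinarith
  nlinarith [Real.sq_sqrt hε', Real.sqrt_nonneg ε, sq_nonneg (w - Real.sqrt ε / 2),
    sq_nonneg (w + Real.sqrt ε / 2)]

include hε in
private lemma norm_sub_cv :
    ‖v - cfcₙ (fun s : ℝ => s / (s + ε)) (b : A) * v‖ ≤ Real.sqrt ε / 2 := by
  set c := cfcₙ (fun s : ℝ => s / (s + ε)) (b : A) with hc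
  set w := v - c * v with hwdef
  have h1 : w * star w = (b : A) - (b:A) * c - (c * (b:A) - c * (b:A) * c) := by
    rw [hwdef, star_sub, star_mul, (csa v (ε := ε)).star_eq]
    noncomm_ring
  have e1 : (b : A) * c = cfcₙ (fun s : ℝ => s * (s / (s + ε))) (b:A) :=
    cfc_b_mul v _ (hcc v hε) (hc0 (ε := ε))
  have e2 : c * (b : A) = cfcₙ (fun s : ℝ => (s / (s + ε)) * s) (b:A) :=
    cfc_mul_b v _ (hcc v hε) (hc0 (ε := ε))
  have e3 : c * (b : A) * c = cfcₙ (fun s : ℝ => (s / (s + ε)) * s * (s / (s + ε))) (b:A) := by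
    rw [e2, cfc_mul' v (fun s : ℝ => s / (s + ε) * s) (fun s : ℝ => s / (s + ε)) ((hcc v hε).mul (continuousOn_id' _)) (by simp) (hcc v hε)
      (hc0 (ε := ε))]
  have hid : (b : A) = cfcₙ (fun s : ℝ => s) (b:A) := (cfcₙ_id' ℝ _ (hbs v)).symm
  have h2 : w * star w =
      cfcₙ (fun s : ℝ => s - s * (s/(s+ε)) - ((s/(s+ε)) * s - (s/(s+ε)) * s * (s/(s+ε)))) (b:A) := by
    rw [h1, e3, e2, e1]
    nth_rewrite 1 [hid]
    rw [
      ← cfcₙ_sub (fun s : ℝ => s / (s + ε) * s) (fun s : ℝ => s / (s + ε) * s * (s / (s + ε))) _ ((hcc v hε).mul (continuousOn_id' _)) (by simp)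
        (((hcc v hε).mul (continuousOn_id' _)).mul (hcc v hε)) (by simp),
      ← cfcₙ_sub (fun s : ℝ => s) (fun s : ℝ => s * (s / (s + ε))) _ (continuousOn_id' _) rfl
        (((continuousOn_id' _).mul (hcc v hε))) (by simp),
      ← cfcₙ_sub (fun s : ℝ => s - s * (s / (s + ε))) (fun s : ℝ => s / (s + ε) * s - s / (s + ε) * s * (s / (s + ε))) _ ((continuousOn_id' _).sub
          ((continuousOn_id' _).mul (hcc v hε)))
        (by simp) ((((hcc v hε).mul (continuousOn_id' _)).sub
          (((hcc v hε).mul (continuousOn_id' _)).mul (hcc v hε)))) (by simp)]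
  have h3 : ‖w * star w‖ ≤ ε / 4 := by
    rw [h2]
    refine norm_cfcₙ_le fun s hs => ?_
    have h0 := qs_nonneg v s hs
    have key : s - s * (s/(s+ε)) - ((s/(s+ε)) * s - (s/(s+ε)) * s * (s/(s+ε)))
        = s * ε^2 / ((s+ε)*(s+ε)) := by
      field_simp
      ring
    rw [Real.norm_eq_abs, key, abs_of_nonneg (by positivity), div_le_iff₀ (by positivity)]
    nlinarith [mul_nonneg hε.le (sq_nonneg (s - ε))]
  refine sqrt_quarter ‖w‖ (norm_nonneg w) ?_
  calc ‖w‖ * ‖w‖ = ‖w * star w‖ := (CStarRing.norm_self_mul_star).symm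
    _ ≤ ε / 4 := h3

include hε in
private lemma norm_sqrt_sub_bg :
    ‖cfcₙ Real.sqrt (b : A) - (b : A) * cfcₙ (fun s : ℝ => Real.sqrt s / (s + ε)) (b:A)‖
      ≤ Real.sqrt ε / 2 := by
  rw [cfc_b_mul v _ (hgc v hε) (hg0 (ε := ε)),
    ← cfcₙ_sub Real.sqrt (fun s : ℝ => s * (Real.sqrt s / (s + ε))) _ Real.continuous_sqrt.continuousOn Real.sqrt_zero
      ((continuousOn_id' _).mul (hgc v hε)) (by simp)]
  refine norm_cfcₙ_le fun s hs => ?_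
  have h0 := qs_nonneg v s hs
  have key : Real.sqrt s - s * (Real.sqrt s / (s+ε)) = Real.sqrt s * ε / (s+ε) := by
    field_simp
    ring
  rw [Real.norm_eq_abs, key, abs_of_nonneg (by positivity), div_le_iff₀ (by positivity)]
  nlinarith [mul_nonneg (Real.sqrt_nonneg ε) (sq_nonneg (Real.sqrt s - Real.sqrt ε)),
    Real.sq_sqrt h0, Real.sq_sqrt hε.le, Real.sqrt_nonneg s, Real.sqrt_nonneg ε]

end eps2

private lemma norm_abs (v : A) : ‖cfcₙ Real.sqrt (v * star v)‖ = ‖v‖ := by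
  have has : IsSelfAdjoint (cfcₙ Real.sqrt (v * star v)) := cfcₙ_predicate _ _
  have h1 : ‖cfcₙ Real.sqrt (v * star v)‖ * ‖cfcₙ Real.sqrt (v * star v)‖ = ‖v‖ * ‖v‖ := by
    calc ‖cfcₙ Real.sqrt (v * star v)‖ * ‖cfcₙ Real.sqrt (v * star v)‖
        = ‖cfcₙ Real.sqrt (v * star v) * star (cfcₙ Real.sqrt (v * star v))‖ :=
          (CStarRing.norm_self_mul_star).symm
      _ = ‖v * star v‖ := by rw [has.star_eq, my_sqrt_sq v]
      _ = ‖v‖ * ‖v‖ := CStarRing.norm_self_mul_star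
  calc ‖cfcₙ Real.sqrt (v * star v)‖
      = Real.sqrt (‖cfcₙ Real.sqrt (v * star v)‖ * ‖cfcₙ Real.sqrt (v * star v)‖) :=
        (Real.sqrt_mul_self (norm_nonneg _)).symm
    _ = Real.sqrt (‖v‖ * ‖v‖) := by rw [h1]
    _ = ‖v‖ := Real.sqrt_mul_self (norm_nonneg v)

section main

variable {A : Type*} [NonUnitalCStarAlgebra A]

private lemma abs_star_eq (v : A) : cstarAbs (star v) = cfcₙ Real.sqrt (v * star v) := by
  rw [cstarAbs, star_star]

private lemma imp1 (x y : A) (h : SBJOrth x y) : SBJOrth (cstarAbs (star x)) y := by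
  rw [abs_star_eq]
  intro z
  refine le_of_forall_pos_le_add fun δ hδ => ?_
  have hε : (0:ℝ) < δ ^ 2 := by positivity
  set ε := δ ^ 2 with hεdef
  set g := cfcₙ (fun s : ℝ => Real.sqrt s / (s + ε)) (x * star x) with hgdef
  set c := cfcₙ (fun s : ℝ => s / (s + ε)) (x * star x) with hcdef
  set a := cfcₙ Real.sqrt (x * star x) with hadef
  have hgx : ‖g * x‖ ≤ 1 := norm_contract_left x hε
  have hag : a * g = c := sqrt_mul_g x hε
  have hident : (a + y * z) * (g * x) = c * x + y * (z * (g * x)) := by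
    rw [add_mul, show a * (g * x) = c * x from by rw [← mul_assoc, hag], mul_assoc]
  have hsub : ‖x - c * x‖ ≤ Real.sqrt ε / 2 := norm_sub_cv x hε
  have hsq : Real.sqrt ε = δ := by rw [hεdef, Real.sqrt_sq hδ.le]
  have key : ‖a‖ ≤ ‖a + y * z‖ + Real.sqrt ε / 2 := by
    calc ‖a‖ = ‖x‖ := norm_abs x
      _ ≤ ‖x + y * (z * (g * x))‖ := h _
      _ ≤ ‖c * x + y * (z * (g * x))‖ + ‖x - c * x‖ := by
          rw [show x + y * (z * (g * x)) = (c * x + y * (z * (g * x))) + (x - c * x) by abel]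
          exact norm_add_le _ _
      _ ≤ ‖(a + y * z) * (g * x)‖ + Real.sqrt ε / 2 := by
          rw [hident]; exact add_le_add le_rfl hsub
      _ ≤ ‖a + y * z‖ * ‖g * x‖ + Real.sqrt ε / 2 := add_le_add (norm_mul_le _ _) le_rfl
      _ ≤ ‖a + y * z‖ * 1 + Real.sqrt ε / 2 := by
          exact add_le_add (mul_le_mul_of_nonneg_left hgx (norm_nonneg _)) le_rfl
      _ = ‖a + y * z‖ + Real.sqrt ε / 2 := by rw [mul_one]
  rw [hsq] at key
  linarith

private lemma imp2 (x y : A) (h : SBJOrth (cstarAbs (star x)) y) : SBJOrth x y := by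
  rw [abs_star_eq] at h
  intro z
  refine le_of_forall_pos_le_add fun δ hδ => ?_
  have hε : (0:ℝ) < δ ^ 2 := by positivity
  set ε := δ ^ 2 with hεdef
  set g := cfcₙ (fun s : ℝ => Real.sqrt s / (s + ε)) (x * star x) with hgdef
  set a := cfcₙ Real.sqrt (x * star x) with hadef
  have hgx : ‖star x * g‖ ≤ 1 := norm_contract_right x hε
  have hident : (x + y * z) * (star x * g) = (x * star x) * g + y * (z * (star x * g)) := by
    rw [add_mul, ← mul_assoc x (star x) g, mul_assoc y z _]
  have hsub : ‖a - (x * star x) * g‖ ≤ Real.sqrt ε / 2 := norm_sqrt_sub_bg x hε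
  have hsq : Real.sqrt ε = δ := by rw [hεdef, Real.sqrt_sq hδ.le]
  have key : ‖x‖ ≤ ‖x + y * z‖ + Real.sqrt ε / 2 := by
    calc ‖x‖ = ‖a‖ := (norm_abs x).symm
      _ ≤ ‖a + y * (z * (star x * g))‖ := h _
      _ ≤ ‖(x * star x) * g + y * (z * (star x * g))‖ + ‖a - (x * star x) * g‖ := by
          rw [show a + y * (z * (star x * g))
            = ((x * star x) * g + y * (z * (star x * g))) + (a - (x * star x) * g) by abel]
          exact norm_add_le _ _
      _ ≤ ‖(x + y * z) * (star x * g)‖ + Real.sqrt ε / 2 := by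
          rw [hident]; exact add_le_add le_rfl hsub
      _ ≤ ‖x + y * z‖ * ‖star x * g‖ + Real.sqrt ε / 2 := add_le_add (norm_mul_le _ _) le_rfl
      _ ≤ ‖x + y * z‖ * 1 + Real.sqrt ε / 2 := by
          exact add_le_add (mul_le_mul_of_nonneg_left hgx (norm_nonneg _)) le_rfl
      _ = ‖x + y * z‖ + Real.sqrt ε / 2 := by rw [mul_one]
  rw [hsq] at key
  linarith

private lemma imp3 (x y : A) (h : SBJOrth x y) : SBJOrth x (cstarAbs (star y)) := by
  rw [abs_star_eq]
  intro z
  refine le_of_forall_pos_le_add fun δ hδ => ?_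
  have hε : (0:ℝ) < (δ / (1 + ‖z‖)) ^ 2 := by positivity
  set ε := (δ / (1 + ‖z‖)) ^ 2 with hεdef
  set g := cfcₙ (fun s : ℝ => Real.sqrt s / (s + ε)) (y * star y) with hgdef
  set aY := cfcₙ Real.sqrt (y * star y) with hadef
  have hsub : ‖aY - (y * star y) * g‖ ≤ Real.sqrt ε / 2 := norm_sqrt_sub_bg y hε
  have hsq : Real.sqrt ε = δ / (1 + ‖z‖) := by rw [hεdef, Real.sqrt_sq (by positivity)]
  have key : ‖x‖ ≤ ‖x + aY * z‖ + (Real.sqrt ε / 2) * ‖z‖ := by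
    calc ‖x‖ ≤ ‖x + y * (star y * (g * z))‖ := h _
      _ = ‖x + aY * z + ((y * star y) * g - aY) * z‖ := by
          rw [show x + y * (star y * (g * z))
            = x + aY * z + ((y * star y) * g - aY) * z from by noncomm_ring]
      _ ≤ ‖x + aY * z‖ + ‖((y * star y) * g - aY) * z‖ := norm_add_le _ _
      _ ≤ ‖x + aY * z‖ + ‖(y * star y) * g - aY‖ * ‖z‖ :=
          add_le_add le_rfl (norm_mul_le _ _)
      _ ≤ ‖x + aY * z‖ + (Real.sqrt ε / 2) * ‖z‖ := by
          refine add_le_add le_rfl (mul_le_mul_of_nonneg_right ?_ (norm_nonneg z))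
          rw [norm_sub_rev]; exact hsub
  rw [hsq] at key
  have hbound : (δ / (1 + ‖z‖) / 2) * ‖z‖ ≤ δ := by
    rw [div_div, div_mul_eq_mul_div, div_le_iff₀ (by positivity)]
    nlinarith [norm_nonneg z]
  linarith

private lemma imp4 (x y : A) (h : SBJOrth x (cstarAbs (star y))) : SBJOrth x y := by
  rw [abs_star_eq] at h
  intro z
  refine le_of_forall_pos_le_add fun δ hδ => ?_
  have hε : (0:ℝ) < (δ / (1 + ‖z‖)) ^ 2 := by positivity
  set ε := (δ / (1 + ‖z‖)) ^ 2 with hεdef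
  set g := cfcₙ (fun s : ℝ => Real.sqrt s / (s + ε)) (y * star y) with hgdef
  set c := cfcₙ (fun s : ℝ => s / (s + ε)) (y * star y) with hcdef
  set aY := cfcₙ Real.sqrt (y * star y) with hadef
  have hag : aY * g = c := sqrt_mul_g y hε
  have hsub : ‖y - c * y‖ ≤ Real.sqrt ε / 2 := norm_sub_cv y hε
  have hsq : Real.sqrt ε = δ / (1 + ‖z‖) := by rw [hεdef, Real.sqrt_sq (by positivity)]
  have key : ‖x‖ ≤ ‖x + y * z‖ + (Real.sqrt ε / 2) * ‖z‖ := by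
    calc ‖x‖ ≤ ‖x + aY * (g * (y * z))‖ := h _
      _ = ‖x + y * z + ((c * y - y) * z)‖ := by
          rw [show x + aY * (g * (y * z)) = x + (aY * g) * (y * z) from by rw [mul_assoc],
            hag, show x + c * (y * z) = x + y * z + ((c * y - y) * z) from by noncomm_ring]
      _ ≤ ‖x + y * z‖ + ‖(c * y - y) * z‖ := norm_add_le _ _
      _ ≤ ‖x + y * z‖ + ‖c * y - y‖ * ‖z‖ := add_le_add le_rfl (norm_mul_le _ _)
      _ ≤ ‖x + y * z‖ + (Real.sqrt ε / 2) * ‖z‖ := by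
          refine add_le_add le_rfl (mul_le_mul_of_nonneg_right ?_ (norm_nonneg z))
          rw [norm_sub_rev]; exact hsub
  rw [hsq] at key
  have hbound : (δ / (1 + ‖z‖) / 2) * ‖z‖ ≤ δ := by
    rw [div_div, div_mul_eq_mul_div, div_le_iff₀ (by positivity)]
    nlinarith [norm_nonneg z]
  linarith

end main

end SBJAux

open SBJAux in
/-- Lemma: the following are equivalent: (i) `x ⊥ˢ y`; (ii) `|x*| ⊥ˢ y`;
(iii) `x ⊥ˢ |y*|`; (iv) `|x*| ⊥ˢ |y*|`. -/
theorem sbj_abs_polar {A : Type*} [NonUnitalCStarAlgebra A] (x y : A) :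
    (SBJOrth x y ↔ SBJOrth (cstarAbs (star x)) y) ∧
    (SBJOrth x y ↔ SBJOrth x (cstarAbs (star y))) ∧
    (SBJOrth x y ↔ SBJOrth (cstarAbs (star x)) (cstarAbs (star y))) := by
  have e1 : SBJOrth x y ↔ SBJOrth (cstarAbs (star x)) y := ⟨imp1 x y, imp2 x y⟩
  have e2 : ∀ x' : A, SBJOrth x' y ↔ SBJOrth x' (cstarAbs (star y)) :=
    fun x' => ⟨imp3 x' y, imp4 x' y⟩
  exact ⟨e1, e2 x, e1.trans (e2 _)⟩
end

section
/- Let 𝔄 be a unital C*-algebra and let x ∈ 𝔄 with x ≠ 0. Then the following are equivalent: (i) x is right symmetric for strong Birkhoff–James orthogonality; (ii) x is right invertible (there exists x' ∈ 𝔄 with x·x' = 1); (iii) x·x* is invertible in 𝔄. -/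
/-- `x` is right symmetric for `⊥ˢ` if `y ⊥ˢ x` implies `x ⊥ˢ y` for all `y`. -/
def RightSymmetric {A : Type*} [NonUnitalNormedRing A] (x : A) : Prop :=
  ∀ y : A, SBJOrth y x → SBJOrth x y

lemma rightSymmetric_of_rightInv {A : Type*} [CStarAlgebra A] {x x' : A}
    (h : x * x' = 1) : RightSymmetric x := by
  intro y hy
  have h0 : ‖y‖ ≤ ‖y + x * (x' * (-y))‖ := hy _
  have : y + x * (x' * (-y)) = 0 := by
    rw [← mul_assoc, h, one_mul, add_neg_cancel]
  rw [this, norm_zero] at h0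
  have hy0 : y = 0 := by
    have := norm_nonneg y
    have : ‖y‖ = 0 := le_antisymm h0 this
    exact norm_eq_zero.mp this
  intro z
  simp [hy0]

lemma rightInv_of_rightSymmetric {A : Type*} [CStarAlgebra A] {x : A}
    (hx : x ≠ 0) (h : RightSymmetric x) : ∃ x' : A, x * x' = 1 := by
  have : Nontrivial A := nontrivial_of_ne x 0 hx
  by_contra hno
  push_neg at hno
  have hone : SBJOrth (1 : A) x := by
    intro z
    rw [norm_one]
    by_contra hlt
    push_neg at hlt
    have hu : IsUnit (x * z) := by
      have h1 : IsUnit (1 - (1 + x * z)) := isUnit_one_sub_of_norm_lt_one hlt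
      have h2 : 1 - (1 + x * z) = -(x * z) := by abel
      rw [h2] at h1
      exact (IsUnit.neg_iff _).mp h1
    obtain ⟨u, hu⟩ := hu
    exact hno (z * ↑u⁻¹) (by rw [← mul_assoc, ← hu, Units.mul_inv])
  have hx1 : SBJOrth x 1 := h 1 hone
  have := hx1 (-x)
  simp only [one_mul, add_neg_cancel, norm_zero] at this
  exact hx (norm_eq_zero.mp (le_antisymm this (norm_nonneg x)))

lemma rightInv_iff_isUnit {A : Type*} [CStarAlgebra A] [PartialOrder A]
    [StarOrderedRing A] (x : A) :
    (∃ x' : A, x * x' = 1) ↔ IsUnit (x * star x) := by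
  constructor
  · rintro ⟨x', hx'⟩
    rcases subsingleton_or_nontrivial A with hA | hA
    · exact isUnit_of_subsingleton _
    -- 1 = x * (x' * star x') * star x ≤ ‖x' * star x'‖ • (x * star x)
    have hle : x' * star x' ≤ algebraMap ℝ A ‖x' * star x'‖ :=
      IsSelfAdjoint.le_algebraMap_norm_self (IsSelfAdjoint.mul_star_self x')
    have hconj := star_right_conjugate_le_conjugate hle x
    have h1 : x * (x' * star x') * star x = 1 := by
      calc x * (x' * star x') * star x = (x * x') * star (x * x') := by
            simp [star_mul, mul_assoc]
        _ = 1 := by rw [hx']; simp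
    rw [h1] at hconj
    set r : ℝ := ‖x' * star x'‖ with hr
    have hrewrite : x * algebraMap ℝ A r * star x = algebraMap ℝ A r * (x * star x) := by
      rw [← Algebra.commutes r x, mul_assoc]
    rw [hrewrite] at hconj
    have hone : (0 : A) ≤ 1 := by
      simp
    have hu : IsUnit (algebraMap ℝ A r * (x * star x)) :=
      CStarAlgebra.isUnit_of_le 1 hconj
    have hr0 : r ≠ 0 := by
      intro h0
      have hx'0 : x' = 0 := by
        have : ‖x' * star x'‖ = 0 := h0
        have : ‖x'‖ * ‖x'‖ = 0 := by rwa [← CStarRing.norm_self_mul_star]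
        have : ‖x'‖ = 0 := by nlinarith [norm_nonneg x']
        exact norm_eq_zero.mp this
      rw [hx'0, mul_zero] at hx'
      exact one_ne_zero hx'.symm
    have hur : IsUnit (algebraMap ℝ A r) := by
      refine (IsUnit.map (algebraMap ℝ A) (isUnit_iff_ne_zero.mpr hr0))
    have := hur.unit⁻¹.isUnit.mul hu
    rwa [← mul_assoc, IsUnit.val_inv_mul, one_mul] at this
  · rintro ⟨u, hu⟩
    exact ⟨star x * ↑u⁻¹, by rw [← mul_assoc, ← hu, Units.mul_inv]⟩

/-- Corollary: in a unital C*-algebra, for `x ≠ 0` the following are equivalent: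
(i) `x` is right symmetric for `⊥ˢ`; (ii) `x` is right invertible;
(iii) `x·x*` is invertible. -/
theorem rightSymmetric_iff_rightInvertible {A : Type*} [CStarAlgebra A]
    (x : A) (hx : x ≠ 0) :
    (RightSymmetric x ↔ ∃ x' : A, x * x' = 1) ∧
    (RightSymmetric x ↔ IsUnit (x * star x)) := by
  letI : PartialOrder A := CStarAlgebra.spectralOrder A
  haveI : StarOrderedRing A := CStarAlgebra.spectralOrderedRing A
  have h1 : RightSymmetric x ↔ ∃ x' : A, x * x' = 1 :=
    ⟨rightInv_of_rightSymmetric hx, fun ⟨x', hx'⟩ => rightSymmetric_of_rightInv hx'⟩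
  exact ⟨h1, h1.trans (rightInv_iff_isUnit x)⟩
end
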